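/- If \phi: F_2[x_1,...,x_n] \to F_2[x_1,...,x_m] preserves neural ideals, then for every pseudomonomial f in F_2[x_1,...,x_m] there exists a pseudomonomial \hat{f} in F_2[x_1,...,x_n] with \phi(\hat{f}) = f; consequently for every neural ideal J_D in F_2[x_1,...,x_m] there is a neural ideal J_C in F_2[x_1,...,x_n] with \phi(J_C) = J_D. -/

import Mathlib

open MvPolynomial

/-- The pseudomonomial with positive part `σ` and negative part `τ`. -/
noncomputable def pm {n : ℕ} (σ τ : Finset (Fin n)) : MvPolynomial (Fin n) (ZMod 2) :=
  (∏ i ∈ σ, X i) * ∏ j ∈ τ, (1 - X j)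

/-- A polynomial is a pseudomonomial if it is `pm σ τ` for disjoint `σ τ`. -/
def IsPseudomonomial {n : ℕ} (f : MvPolynomial (Fin n) (ZMod 2)) : Prop :=
  ∃ σ τ : Finset (Fin n), Disjoint σ τ ∧ f = pm σ τ

/-- The indicator pseudomonomial `ρ_v` of a vector `v ∈ F₂ⁿ`. -/
noncomputable def indicatorPM {n : ℕ} (v : Fin n → ZMod 2) : MvPolynomial (Fin n) (ZMod 2) :=
  pm (Finset.univ.filter fun i => v i = 1) (Finset.univ.filter fun i => ¬ v i = 1)

/-- The neural ideal of a code `C ⊆ F₂ⁿ`. -/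
noncomputable def neuralIdeal {n : ℕ} (C : Set (Fin n → ZMod 2)) :
    Ideal (MvPolynomial (Fin n) (ZMod 2)) :=
  Ideal.span (indicatorPM '' {v | v ∉ C})

/-- A ring homomorphism preserves neural ideals if the image of every neural ideal
is a neural ideal. -/
def PreservesNeuralIdeals {n m : ℕ}
    (φ : MvPolynomial (Fin n) (ZMod 2) →+* MvPolynomial (Fin m) (ZMod 2)) : Prop :=
  ∀ C : Set (Fin n → ZMod 2), ∃ D : Set (Fin m → ZMod 2),
    φ '' (neuralIdeal C : Set (MvPolynomial (Fin n) (ZMod 2))) =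
      (neuralIdeal D : Set (MvPolynomial (Fin m) (ZMod 2)))

/-- The bit flip homomorphism `δ_i`. -/
noncomputable def bitFlip {n : ℕ} (i : Fin n) :
    MvPolynomial (Fin n) (ZMod 2) →ₐ[ZMod 2] MvPolynomial (Fin n) (ZMod 2) :=
  aeval (fun j => if j = i then 1 - X j else X j)

/-- The restriction map `ω_{m,m'} : F₂[x₁,…,xₙ] → F₂[x₁,…,x_m]`. -/
noncomputable def restrictionMap (n m m' : ℕ) :
    MvPolynomial (Fin n) (ZMod 2) →ₐ[ZMod 2] MvPolynomial (Fin m) (ZMod 2) :=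
  aeval (fun i : Fin n => if h : (i : ℕ) < m then X (⟨i, h⟩ : Fin m)
    else if (i : ℕ) < m' then 0 else 1)

section Aux

open Finset

variable {k : ℕ}

lemma zmod2_cases (a : ZMod 2) : a = 0 ∨ a = 1 := (by decide : ∀ b : ZMod 2, b = 0 ∨ b = 1) a

lemma zmod2_zero_ne_one : (0 : ZMod 2) ≠ 1 := by decide

lemma pm_eq {σ τ : Finset (Fin k)} (hd : Disjoint σ τ) :
    pm σ τ = ∏ i ∈ σ ∪ τ, (if i ∈ σ then X i else (1 - X i : MvPolynomial (Fin k) (ZMod 2))) := by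
  rw [Finset.prod_union hd, pm]
  congr 1
  · exact (Finset.prod_congr rfl fun i hi => by rw [if_pos hi]).symm
  · exact (Finset.prod_congr rfl fun i hi => by
      rw [if_neg (fun hmem => (Finset.disjoint_left.1 hd) hmem hi)]).symm

lemma indicatorPM_eq (v : Fin k → ZMod 2) :
    indicatorPM v = ∏ i, (if v i = 1 then X i else (1 - X i : MvPolynomial (Fin k) (ZMod 2))) := by
  rw [indicatorPM, pm, ← Finset.prod_ite]

lemma sum_indicator (T : Finset (Fin k)) (a : Fin k → ZMod 2) :
    ∑ v ∈ Fintype.piFinset (fun i => if i ∈ T then {a i} else (Finset.univ : Finset (ZMod 2))),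
        indicatorPM v
      = ∏ i ∈ T, (if a i = 1 then X i else (1 - X i : MvPolynomial (Fin k) (ZMod 2))) := by
  have huniv : (Finset.univ : Finset (ZMod 2)) = {0, 1} := by decide
  calc ∑ v ∈ Fintype.piFinset (fun i => if i ∈ T then {a i} else (Finset.univ : Finset (ZMod 2))),
        indicatorPM v
      = ∑ v ∈ Fintype.piFinset (fun i => if i ∈ T then {a i} else (Finset.univ : Finset (ZMod 2))),
        ∏ i, (if v i = 1 then X i else (1 - X i : MvPolynomial (Fin k) (ZMod 2))) :=
        Finset.sum_congr rfl fun v _ => indicatorPM_eq v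
    _ = ∏ i, ∑ b ∈ (if i ∈ T then {a i} else (Finset.univ : Finset (ZMod 2))),
          (if b = 1 then X i else (1 - X i : MvPolynomial (Fin k) (ZMod 2))) :=
        (Finset.prod_univ_sum (fun i => if i ∈ T then {a i} else (Finset.univ : Finset (ZMod 2)))
          (fun i b => if b = 1 then X i else (1 - X i : MvPolynomial (Fin k) (ZMod 2)))).symm
    _ = ∏ i, (if i ∈ T then (if a i = 1 then X i else (1 - X i : MvPolynomial (Fin k) (ZMod 2)))
          else 1) := by
        refine Finset.prod_congr rfl fun i _ => ?_
        by_cases hi : i ∈ T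
        · rw [if_pos hi, if_pos hi, Finset.sum_singleton]
        · rw [if_neg hi, if_neg hi, huniv]
          rw [Finset.sum_insert (by decide), Finset.sum_singleton]
          rw [if_neg (by decide : ¬ (0 : ZMod 2) = 1), if_pos rfl]
          ring
    _ = ∏ i ∈ T, (if a i = 1 then X i else (1 - X i : MvPolynomial (Fin k) (ZMod 2))) :=
        by rw [Finset.prod_ite_mem Finset.univ T
            (fun i => if a i = 1 then X i else (1 - X i : MvPolynomial (Fin k) (ZMod 2))),
          Finset.univ_inter]

end Aux
section Aux2

variable {k : ℕ}

lemma eval_pm (v : Fin k → ZMod 2) (σ τ : Finset (Fin k)) :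
    eval v (pm σ τ) = (∏ i ∈ σ, v i) * ∏ j ∈ τ, (1 - v j) := by
  rw [pm, map_mul, map_prod, map_prod]
  simp only [eval_X, map_sub, map_one]

lemma eval_pm_zero_left {σ τ : Finset (Fin k)} {v : Fin k → ZMod 2} {i : Fin k}
    (hi : i ∈ σ) (hv : v i = 0) : eval v (pm σ τ) = 0 := by
  rw [eval_pm, Finset.prod_eq_zero hi hv, zero_mul]

lemma eval_pm_zero_right {σ τ : Finset (Fin k)} {v : Fin k → ZMod 2} {j : Fin k}
    (hj : j ∈ τ) (hv : v j = 1) : eval v (pm σ τ) = 0 := by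
  rw [eval_pm, Finset.prod_eq_zero hj (by rw [hv, sub_self]), mul_zero]

lemma eval_pm_pattern {σ τ : Finset (Fin k)} {v : Fin k → ZMod 2}
    (h1 : ∀ i ∈ σ, v i = 1) (h0 : ∀ j ∈ τ, v j = 0) : eval v (pm σ τ) = 1 := by
  rw [eval_pm, Finset.prod_eq_one (fun i hi => h1 i hi),
    Finset.prod_eq_one (fun j hj => by rw [h0 j hj, sub_zero]), one_mul]

lemma eval_pm_one {σ τ : Finset (Fin k)} {v : Fin k → ZMod 2}
    (h : eval v (pm σ τ) = 1) : (∀ i ∈ σ, v i = 1) ∧ (∀ j ∈ τ, v j = 0) := by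
  constructor
  · intro i hi
    rcases zmod2_cases (v i) with h0 | h1
    · exact absurd (eval_pm_zero_left hi h0 (τ := τ)) (by rw [h]; decide)
    · exact h1
  · intro j hj
    rcases zmod2_cases (v j) with h0 | h1
    · exact h0
    · exact absurd (eval_pm_zero_right hj h1 (σ := σ)) (by rw [h]; decide)

lemma pm_mem_neuralIdeal {σ τ : Finset (Fin k)} (hd : Disjoint σ τ)
    (C : Set (Fin k → ZMod 2))
    (hC : ∀ v : Fin k → ZMod 2, (∀ i ∈ σ, v i = 1) → (∀ j ∈ τ, v j = 0) → v ∉ C) :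
    pm σ τ ∈ neuralIdeal C := by
  set a : Fin k → ZMod 2 := fun i => if i ∈ σ then 1 else 0 with ha
  have key : pm σ τ = ∑ v ∈ Fintype.piFinset
      (fun i => if i ∈ σ ∪ τ then {a i} else (Finset.univ : Finset (ZMod 2))), indicatorPM v := by
    rw [sum_indicator (σ ∪ τ) a, pm_eq hd]
    refine Finset.prod_congr rfl fun i _ => ?_
    by_cases hi : i ∈ σ
    · rw [if_pos hi, if_pos (by simp [ha, hi])]
    · rw [if_neg hi, if_neg (by simp [ha, hi])]
  rw [key]
  refine Ideal.sum_mem _ fun v hv => Ideal.subset_span ?_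
  rw [Fintype.mem_piFinset] at hv
  have hagree : ∀ i ∈ σ ∪ τ, v i = a i := by
    intro i hi
    have := hv i
    rw [if_pos hi] at this
    exact Finset.mem_singleton.1 this
  refine ⟨v, hC v (fun i hi => ?_) (fun j hj => ?_), rfl⟩
  · rw [hagree i (Finset.mem_union_left _ hi), ha]
    simp [hi]
  · have hjσ : j ∉ σ := fun hmem => (Finset.disjoint_left.1 hd) hmem hj
    rw [hagree j (Finset.mem_union_right _ hj), ha]
    simp [hjσ]

lemma pm_dvd_pm {σ τ σ' τ' : Finset (Fin k)} (hσ : σ ⊆ σ') (hτ : τ ⊆ τ') :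
    pm σ τ ∣ pm σ' τ' :=
  mul_dvd_mul (Finset.prod_dvd_prod_of_subset _ _ _ hσ) (Finset.prod_dvd_prod_of_subset _ _ _ hτ)

lemma pm_dvd_indicator {σ τ : Finset (Fin k)} {v : Fin k → ZMod 2}
    (h1 : ∀ i ∈ σ, v i = 1) (h2 : ∀ j ∈ τ, ¬ v j = 1) : pm σ τ ∣ indicatorPM v := by
  rw [indicatorPM]
  exact pm_dvd_pm (fun i hi => Finset.mem_filter.2 ⟨Finset.mem_univ _, h1 i hi⟩)
    (fun j hj => Finset.mem_filter.2 ⟨Finset.mem_univ _, h2 j hj⟩)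

lemma neuralIdeal_X (i : Fin k) :
    neuralIdeal {v : Fin k → ZMod 2 | v i = 0} = Ideal.span {X i} := by
  apply le_antisymm
  · rw [neuralIdeal, Ideal.span_le]
    rintro - ⟨v, hv, rfl⟩
    have hv1 : v i = 1 := (zmod2_cases (v i)).resolve_left hv
    rw [SetLike.mem_coe, Ideal.mem_span_singleton]
    have := pm_dvd_indicator (σ := {i}) (τ := ∅) (v := v)
      (fun j hj => by rwa [Finset.mem_singleton.1 hj]) (fun j hj => absurd hj (Finset.notMem_empty j))
    simpa [pm] using this
  · rw [Ideal.span_le, Set.singleton_subset_iff]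
    have : (X i : MvPolynomial (Fin k) (ZMod 2)) = pm {i} ∅ := by simp [pm]
    rw [SetLike.mem_coe, this]
    exact pm_mem_neuralIdeal (by simp) _ fun v hv _ hvC =>
      zmod2_zero_ne_one (hvC.symm.trans (hv i (Finset.mem_singleton_self i)))

lemma neuralIdeal_one_sub_X (i : Fin k) :
    neuralIdeal {v : Fin k → ZMod 2 | v i = 1} = Ideal.span {1 - X i} := by
  apply le_antisymm
  · rw [neuralIdeal, Ideal.span_le]
    rintro - ⟨v, hv, rfl⟩
    rw [SetLike.mem_coe, Ideal.mem_span_singleton]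
    have := pm_dvd_indicator (σ := ∅) (τ := {i}) (v := v)
      (fun j hj => absurd hj (Finset.notMem_empty j))
      (fun j hj => by rwa [Finset.mem_singleton.1 hj])
    simpa [pm] using this
  · rw [Ideal.span_le, Set.singleton_subset_iff]
    have : (1 - X i : MvPolynomial (Fin k) (ZMod 2)) = pm ∅ {i} := by simp [pm]
    rw [SetLike.mem_coe, this]
    exact pm_mem_neuralIdeal (by simp) _ fun v _ hv hvC =>
      zmod2_zero_ne_one ((hv i (Finset.mem_singleton_self i)).symm.trans hvC)

lemma neuralIdeal_empty : neuralIdeal (∅ : Set (Fin k → ZMod 2)) = ⊤ := by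
  rw [Ideal.eq_top_iff_one]
  have : (1 : MvPolynomial (Fin k) (ZMod 2)) = pm ∅ ∅ := by simp [pm]
  rw [this]
  exact pm_mem_neuralIdeal (by simp) _ fun v _ _ hv => hv

end Aux2

section Aux3

variable {k : ℕ}

lemma prime_X_zmod2 (i : Fin k) : Prime (X i : MvPolynomial (Fin k) (ZMod 2)) := by
  cases k with
  | zero => exact i.elim0
  | succ k =>
    rw [← MulEquiv.prime_iff (renameEquiv (ZMod 2) (Equiv.swap i (0 : Fin (k + 1)))).toMulEquiv]
    have h1 : (renameEquiv (ZMod 2) (Equiv.swap i (0 : Fin (k + 1)))).toMulEquiv (X i)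
        = (X 0 : MvPolynomial (Fin (k + 1)) (ZMod 2)) := by
      show rename (Equiv.swap i (0 : Fin (k + 1))) (X i) = _
      rw [rename_X, Equiv.swap_apply_left]
    rw [h1, ← MulEquiv.prime_iff (finSuccEquiv (ZMod 2) k).toMulEquiv]
    have h2 : (finSuccEquiv (ZMod 2) k).toMulEquiv (X 0) = Polynomial.X := by
      show finSuccEquiv (ZMod 2) k (X 0) = Polynomial.X
      exact finSuccEquiv_X_zero
    rw [h2]
    exact Polynomial.prime_X

lemma prime_one_sub_X (i : Fin k) : Prime (1 - X i : MvPolynomial (Fin k) (ZMod 2)) := by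
  let f : MvPolynomial (Fin k) (ZMod 2) →ₐ[ZMod 2] MvPolynomial (Fin k) (ZMod 2) :=
    aeval (fun j => if j = i then (1 - X j : MvPolynomial (Fin k) (ZMod 2)) else X j)
  have hff : f.comp f = AlgHom.id (ZMod 2) (MvPolynomial (Fin k) (ZMod 2)) := by
    apply algHom_ext
    intro j
    by_cases hj : j = i <;> simp [f, hj, sub_sub_cancel]
  have h := (MulEquiv.prime_iff (AlgEquiv.ofAlgHom f f hff hff).toMulEquiv (p := X i)).2 (prime_X_zmod2 i)
  have he : (AlgEquiv.ofAlgHom f f hff hff).toMulEquiv (X i) = 1 - X i := by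
    show f (X i) = 1 - X i
    simp [f]
  rwa [he] at h

lemma isUnit_eq_one : ∀ {k : ℕ} (u : MvPolynomial (Fin k) (ZMod 2)), IsUnit u → u = 1 := by
  intro k
  induction k with
  | zero =>
    intro u hu
    obtain ⟨a, rfl⟩ := C_surjective (Fin 0) u
    have ha : IsUnit a := by simpa using hu.map (constantCoeff (σ := Fin 0) (R := ZMod 2))
    have : a = 1 := by
      rcases zmod2_cases a with rfl | rfl
      · exact absurd ha (by simp)
      · rfl
    rw [this, map_one]
  | succ k ih =>
    intro u hu
    have h2 : IsUnit (finSuccEquiv (ZMod 2) k u) := hu.map (finSuccEquiv (ZMod 2) k)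
    rw [Polynomial.isUnit_iff] at h2
    obtain ⟨r, hr, hru⟩ := h2
    have hr1 : r = 1 := ih r hr
    have : finSuccEquiv (ZMod 2) k u = 1 := by rw [← hru, hr1, map_one]
    have := congrArg (finSuccEquiv (ZMod 2) k).symm this
    simpa using this

lemma exists_subset_of_dvd_prod {ι : Type*} :
    ∀ (s : Finset ι) (f : ι → MvPolynomial (Fin k) (ZMod 2)),
      (∀ i ∈ s, Prime (f i)) → ∀ g, g ∣ ∏ i ∈ s, f i →
      ∃ t ⊆ s, g = ∏ i ∈ t, f i := by
  classical
  intro s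
  induction s using Finset.induction_on with
  | empty =>
    intro f _ g hg
    rw [Finset.prod_empty] at hg
    exact ⟨∅, Finset.Subset.refl _, by
      rw [Finset.prod_empty]
      exact isUnit_eq_one g (isUnit_of_dvd_one hg)⟩
  | @insert a s ha ih =>
    intro f hf g hg
    rw [Finset.prod_insert ha] at hg
    obtain ⟨c, hc⟩ := hg
    have hpa : Prime (f a) := hf a (Finset.mem_insert_self a s)
    have hfa_dvd : f a ∣ g * c := ⟨∏ i ∈ s, f i, hc.symm⟩
    rcases hpa.dvd_or_dvd hfa_dvd with hag | hac
    · obtain ⟨g', rfl⟩ := hag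
      have hcancel : ∏ i ∈ s, f i = g' * c := by
        apply mul_left_cancel₀ hpa.ne_zero
        linear_combination hc
      obtain ⟨t, hts, ht⟩ := ih f (fun i hi => hf i (Finset.mem_insert_of_mem hi)) g' ⟨c, hcancel⟩
      refine ⟨insert a t, Finset.insert_subset_insert a hts, ?_⟩
      rw [Finset.prod_insert (fun hat => ha (hts hat)), ht]
    · obtain ⟨c', rfl⟩ := hac
      have hcancel : ∏ i ∈ s, f i = g * c' := by
        apply mul_left_cancel₀ hpa.ne_zero
        linear_combination hc
      obtain ⟨t, hts, ht⟩ := ih f (fun i hi => hf i (Finset.mem_insert_of_mem hi)) g ⟨c', hcancel⟩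
      exact ⟨t, hts.trans (Finset.subset_insert a s), ht⟩

lemma isPseudomonomial_of_dvd {σ τ : Finset (Fin k)} (hd : Disjoint σ τ)
    {g : MvPolynomial (Fin k) (ZMod 2)} (hg : g ∣ pm σ τ) : IsPseudomonomial g := by
  rw [pm_eq hd] at hg
  have hprime : ∀ i ∈ σ ∪ τ,
      Prime (if i ∈ σ then X i else (1 - X i : MvPolynomial (Fin k) (ZMod 2))) := by
    intro i _
    by_cases hi : i ∈ σ
    · rw [if_pos hi]; exact prime_X_zmod2 i
    · rw [if_neg hi]
      exact prime_one_sub_X i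
  obtain ⟨t, hts, ht⟩ := exists_subset_of_dvd_prod (σ ∪ τ) _ hprime g hg
  refine ⟨t ∩ σ, t \ σ, Finset.disjoint_of_subset_left (Finset.inter_subset_right)
    (Finset.disjoint_sdiff), ?_⟩
  rw [ht, pm_eq (Finset.disjoint_of_subset_left (Finset.inter_subset_right)
    (Finset.disjoint_sdiff)), Finset.union_comm, Finset.sdiff_union_inter]
  refine Finset.prod_congr rfl fun i hi => ?_
  by_cases hiσ : i ∈ σ
  · rw [if_pos hiσ, if_pos (Finset.mem_inter.2 ⟨hi, hiσ⟩)]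
  · rw [if_neg hiσ, if_neg (fun hmem => hiσ (Finset.mem_inter.1 hmem).2)]

end Aux3

section Aux4

variable {k : ℕ}

lemma pm_ne_zero {σ τ : Finset (Fin k)} (hd : Disjoint σ τ) : pm σ τ ≠ 0 := by
  intro h0
  have h1 : eval (fun j => if j ∈ σ then (1 : ZMod 2) else 0) (pm σ τ) = 1 :=
    eval_pm_pattern (fun i hi => by simp [hi])
      (fun j hj => by
        have : j ∉ σ := fun hmem => (Finset.disjoint_left.1 hd) hmem hj
        simp [this])
  rw [h0, map_zero] at h1
  exact zmod2_zero_ne_one h1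

lemma pm_one_sub {p : MvPolynomial (Fin k) (ZMod 2)}
    (hp : IsPseudomonomial p) (hq : IsPseudomonomial (1 - p)) :
    ∃ i, p = X i ∨ p = 1 - X i := by
  obtain ⟨σ, τ, hd, rfl⟩ := hp
  obtain ⟨σ', τ', hd', hq'⟩ := hq
  have heval : ∀ w : Fin k → ZMod 2, eval w (pm σ' τ') = 1 - eval w (pm σ τ) := by
    intro w
    have := congrArg (eval w) hq'
    rw [map_sub, map_one] at this
    linear_combination -this
  have hpmne : pm σ τ ≠ 0 := pm_ne_zero hd
  rcases Finset.eq_empty_or_nonempty (σ ∪ τ) with hun | ⟨i, hi⟩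
  · exfalso
    rw [Finset.union_eq_empty] at hun
    have h1 : pm σ τ = 1 := by rw [hun.1, hun.2]; simp [pm]
    have h0 : pm σ' τ' = 0 := by rw [← hq', h1, sub_self]
    exact pm_ne_zero hd' h0
  rcases Finset.mem_union.1 hi with hiσ | hiτ
  · -- case i ∈ σ : conclude p = X i
    have hq1 : ∀ w : Fin k → ZMod 2, w i = 0 → eval w (pm σ' τ') = 1 := by
      intro w hw
      rw [heval w, eval_pm_zero_left hiσ hw, sub_zero]
    have hiσ' : i ∉ σ' := by
      intro hmem
      have := hq1 (fun _ => 0) rfl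
      rw [eval_pm_zero_left hmem rfl] at this
      exact zmod2_zero_ne_one this
    have hσ' : σ' = ∅ := by
      rw [Finset.eq_empty_iff_forall_notMem]
      intro j hj
      set w : Fin k → ZMod 2 := fun l => if l ∈ σ' \ {j} then 1 else 0 with hwdef
      have hwi : w i = 0 := by simp [hwdef, hiσ']
      have hwj : w j = 0 := by simp [hwdef]
      have := hq1 w hwi
      rw [eval_pm_zero_left hj hwj] at this
      exact zmod2_zero_ne_one this
    have hτ' : τ' ⊆ {i} := by
      intro j hj
      rw [Finset.mem_singleton]
      by_contra hji
      set w : Fin k → ZMod 2 := fun l => if l = j then 1 else 0 with hwdef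
      have hwi : w i = 0 := by
        have : ¬ i = j := fun h => hji h.symm
        simp [hwdef, this]
      have hwj : w j = 1 := by simp [hwdef]
      have := hq1 w hwi
      rw [eval_pm_zero_right hj hwj] at this
      exact zmod2_zero_ne_one this
    rcases Finset.subset_singleton_iff.1 hτ' with hτ'e | hτ'i
    · exfalso
      have : pm σ' τ' = 1 := by rw [hσ', hτ'e]; simp [pm]
      rw [← hq'] at this
      have : pm σ τ = 0 := by linear_combination -this
      exact hpmne this
    · refine ⟨i, Or.inl ?_⟩
      have hq2 : pm σ' τ' = 1 - X i := by rw [hσ', hτ'i]; simp [pm]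
      rw [hq2] at hq'
      linear_combination -hq'
  · -- case i ∈ τ : conclude p = 1 - X i
    have hq1 : ∀ w : Fin k → ZMod 2, w i = 1 → eval w (pm σ' τ') = 1 := by
      intro w hw
      rw [heval w, eval_pm_zero_right hiτ hw, sub_zero]
    have hiτ' : i ∉ τ' := by
      intro hmem
      set w : Fin k → ZMod 2 := fun l => if l = i then 1 else 0 with hwdef
      have := hq1 w (by simp [hwdef])
      rw [eval_pm_zero_right hmem (by simp [hwdef])] at this
      exact zmod2_zero_ne_one this
    have hτ'e : τ' = ∅ := by
      rw [Finset.eq_empty_iff_forall_notMem]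
      intro j hj
      have hji : j ≠ i := fun h => hiτ' (h ▸ hj)
      set w : Fin k → ZMod 2 := fun l => if l = i ∨ l = j then 1 else 0 with hwdef
      have := hq1 w (by simp [hwdef])
      rw [eval_pm_zero_right hj (by simp [hwdef])] at this
      exact zmod2_zero_ne_one this
    have hσ' : σ' ⊆ {i} := by
      intro j hj
      rw [Finset.mem_singleton]
      by_contra hji
      set w : Fin k → ZMod 2 := fun l => if l = i then 1 else 0 with hwdef
      have := hq1 w (by simp [hwdef])
      rw [eval_pm_zero_left hj (by simp [hwdef, hji])] at this
      exact zmod2_zero_ne_one this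
    rcases Finset.subset_singleton_iff.1 hσ' with hσ'e | hσ'i
    · exfalso
      have : pm σ' τ' = 1 := by rw [hσ'e, hτ'e]; simp [pm]
      rw [← hq'] at this
      have : pm σ τ = 0 := by linear_combination -this
      exact hpmne this
    · refine ⟨i, Or.inr ?_⟩
      have hq2 : pm σ' τ' = X i := by rw [hσ'i, hτ'e]; simp [pm]
      rw [hq2] at hq'
      linear_combination -hq'

end Aux4

section Aux5

variable {k k' : ℕ}

lemma disjoint_indicator_filters (v : Fin k → ZMod 2) :
    Disjoint (Finset.univ.filter fun i => v i = 1) (Finset.univ.filter fun i => ¬ v i = 1) :=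
  Finset.disjoint_left.2 fun x hx1 hx2 =>
    (Finset.mem_filter.1 hx2).2 (Finset.mem_filter.1 hx1).2

lemma indicatorPM_def (v : Fin k → ZMod 2) :
    indicatorPM v
      = pm (Finset.univ.filter fun i => v i = 1) (Finset.univ.filter fun i => ¬ v i = 1) := rfl

lemma isPseudomonomial_indicator (v : Fin k → ZMod 2) : IsPseudomonomial (indicatorPM v) :=
  ⟨_, _, disjoint_indicator_filters v, rfl⟩

lemma image_coe_ideal (φ : MvPolynomial (Fin k) (ZMod 2) →+* MvPolynomial (Fin k') (ZMod 2))
    (hφ : Function.Surjective φ) (I : Ideal (MvPolynomial (Fin k) (ZMod 2))) :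
    φ '' (I : Set (MvPolynomial (Fin k) (ZMod 2))) = (Ideal.map φ I : Set _) := by
  ext x
  constructor
  · rintro ⟨g, hg, rfl⟩
    exact Ideal.mem_map_of_mem φ hg
  · intro hx
    obtain ⟨y, hy, hyx⟩ := (Ideal.mem_map_iff_of_surjective φ hφ).1 hx
    exact ⟨y, hy, hyx⟩

lemma X_ne_one_sub (j j' : Fin k) : (X j : MvPolynomial (Fin k) (ZMod 2)) ≠ 1 - X j' := by
  intro hcon
  have := congrArg (eval (fun _ => (0 : ZMod 2))) hcon
  rw [eval_X, map_sub, map_one, eval_X] at this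
  exact zmod2_zero_ne_one (by simpa using this)

lemma isPseudomonomial_prod (A : Finset (Fin k)) (u : Fin k → Fin k')
    (hinj : Function.Injective u) (e : Fin k → Prop) [DecidablePred e] :
    IsPseudomonomial (∏ j ∈ A, if e j then X (u j)
      else (1 - X (u j) : MvPolynomial (Fin k') (ZMod 2))) := by
  refine ⟨(A.filter e).image u, (A.filter (fun j => ¬ e j)).image u, ?_, ?_⟩
  · rw [Finset.disjoint_left]
    rintro x hx1 hx2
    obtain ⟨a, ha, rfl⟩ := Finset.mem_image.1 hx1
    obtain ⟨b, hb, hba⟩ := Finset.mem_image.1 hx2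
    have hab : b = a := hinj hba
    exact (Finset.mem_filter.1 hb).2 (hab ▸ (Finset.mem_filter.1 ha).2)
  · rw [pm, Finset.prod_image (fun x _ y _ hxy => hinj hxy),
      Finset.prod_image (fun x _ y _ hxy => hinj hxy), ← Finset.prod_ite]

end Aux5

theorem preimage_pseudomonomial_and_ideal {n m : ℕ}
    (φ : MvPolynomial (Fin n) (ZMod 2) →+* MvPolynomial (Fin m) (ZMod 2))
    (h : PreservesNeuralIdeals φ) :
    (∀ f : MvPolynomial (Fin m) (ZMod 2), IsPseudomonomial f →
      ∃ fhat : MvPolynomial (Fin n) (ZMod 2), IsPseudomonomial fhat ∧ φ fhat = f) ∧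
    ∀ D : Set (Fin m → ZMod 2), ∃ C : Set (Fin n → ZMod 2),
      φ '' (neuralIdeal C : Set (MvPolynomial (Fin n) (ZMod 2))) =
        (neuralIdeal D : Set (MvPolynomial (Fin m) (ZMod 2))) := by
  classical
  -- φ is surjective
  have hsurj : Function.Surjective φ := by
    obtain ⟨D, hD⟩ := h ∅
    rw [neuralIdeal_empty] at hD
    have h1 : (1 : MvPolynomial (Fin m) (ZMod 2)) ∈ (neuralIdeal D : Set _) := by
      rw [← hD]
      exact ⟨1, by simp, map_one φ⟩
    have hDtop : neuralIdeal D = ⊤ := (Ideal.eq_top_iff_one _).2 h1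
    intro y
    have hy : y ∈ φ '' ((⊤ : Ideal (MvPolynomial (Fin n) (ZMod 2))) : Set _) := by
      rw [hD, hDtop]
      simp
    obtain ⟨g, _, hg⟩ := hy
    exact ⟨g, hg⟩
  -- each φ (X i) is 0, 1, a variable, or the complement of a variable
  have hpmgen : ∀ (g : MvPolynomial (Fin n) (ZMod 2)) (D : Set (Fin m → ZMod 2)),
      Ideal.span {φ g} = neuralIdeal D → φ g ≠ 0 → IsPseudomonomial (φ g) := by
    intro g D hsp hne
    have hex : ∃ w, w ∉ D := by
      by_contra hc
      push_neg at hc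
      have hempty : {v : Fin m → ZMod 2 | v ∉ D} = ∅ :=
        Set.eq_empty_iff_forall_notMem.2 fun v hv => hv (hc v)
      have hbot : neuralIdeal D = ⊥ := by
        rw [neuralIdeal, hempty, Set.image_empty, Ideal.span_empty]
      have hmem : φ g ∈ Ideal.span {φ g} := Ideal.mem_span_singleton_self _
      rw [hsp, hbot, Ideal.mem_bot] at hmem
      exact hne hmem
    obtain ⟨w, hw⟩ := hex
    have hmem : indicatorPM w ∈ Ideal.span {φ g} := by
      rw [hsp]
      exact Ideal.subset_span ⟨w, hw, rfl⟩
    rw [Ideal.mem_span_singleton] at hmem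
    rw [indicatorPM_def] at hmem
    exact isPseudomonomial_of_dvd (disjoint_indicator_filters w) hmem
  have hstruct : ∀ i : Fin n, φ (X i) = 0 ∨ φ (X i) = 1 ∨
      ∃ j, φ (X i) = X j ∨ φ (X i) = 1 - X j := by
    intro i
    by_cases h0 : φ (X i) = 0
    · exact Or.inl h0
    by_cases h1 : φ (X i) = 1
    · exact Or.inr (Or.inl h1)
    refine Or.inr (Or.inr ?_)
    obtain ⟨D1, hD1⟩ := h {v | v i = 0}
    rw [neuralIdeal_X i, image_coe_ideal φ hsurj, Ideal.map_span, Set.image_singleton] at hD1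
    have hP : IsPseudomonomial (φ (X i)) := hpmgen _ _ (SetLike.coe_injective hD1) h0
    obtain ⟨D2, hD2⟩ := h {v | v i = 1}
    rw [neuralIdeal_one_sub_X i, image_coe_ideal φ hsurj, Ideal.map_span,
      Set.image_singleton] at hD2
    have hsub : φ (1 - X i) = 1 - φ (X i) := by rw [map_sub, map_one]
    have hQne : φ (1 - X i) ≠ 0 := by
      rw [hsub, sub_ne_zero]
      exact fun hc => h1 hc.symm
    have hQ : IsPseudomonomial (1 - φ (X i)) := by
      rw [← hsub]
      exact hpmgen _ _ (SetLike.coe_injective hD2) hQne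
    exact pm_one_sub hP hQ
  -- every variable of the target is covered
  have hcover : ∀ j : Fin m, ∃ i : Fin n, φ (X i) = X j ∨ φ (X i) = 1 - X j := by
    intro j
    by_contra hc
    push_neg at hc
    set w0 : Fin m → ZMod 2 := fun _ => 0 with hw0
    set w1 : Fin m → ZMod 2 := fun l => if l = j then 1 else 0 with hw1
    have hkey : ∀ i, eval w0 (φ (X i)) = eval w1 (φ (X i)) := by
      intro i
      rcases hstruct i with he | he | ⟨j', hj'⟩
      · rw [he, map_zero, map_zero]
      · rw [he, map_one, map_one]
      · have hjj : ¬ j' = j := by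
          rintro rfl
          rcases hj' with he | he
          · exact (hc i).1 he
          · exact (hc i).2 he
        rcases hj' with he | he <;> rw [he] <;> simp [hw0, hw1, hjj]
    have hhom : (eval w0).comp φ = (eval w1).comp φ := by
      apply MvPolynomial.ringHom_ext
      · intro a
        rcases zmod2_cases a with rfl | rfl <;> simp
      · intro i
        simpa using hkey i
    obtain ⟨g, hg⟩ := hsurj (X j)
    have h01 := RingHom.congr_fun hhom g
    simp only [RingHom.coe_comp, Function.comp_apply] at h01
    rw [hg, eval_X, eval_X] at h01
    rw [hw0, hw1] at h01
    simp at h01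
  -- Part 1
  have hpart1 : ∀ f : MvPolynomial (Fin m) (ZMod 2), IsPseudomonomial f →
      ∃ fhat : MvPolynomial (Fin n) (ZMod 2), IsPseudomonomial fhat ∧ φ fhat = f := by
    intro f hf
    obtain ⟨σ, τ, hd, rfl⟩ := hf
    choose s hs using hcover
    have hsinj : Function.Injective s := by
      intro j j' hjj
      rcases hs j with h1 | h1 <;> rcases hs j' with h2 | h2 <;> rw [hjj] at h1 <;>
        rw [h1] at h2
      · exact X_injective h2
      · exact absurd h2 (X_ne_one_sub j j')
      · exact absurd h2.symm (X_ne_one_sub j' j)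
      · have : (X j : MvPolynomial (Fin m) (ZMod 2)) = X j' := by linear_combination -h2
        exact X_injective this
    refine ⟨∏ j ∈ σ ∪ τ, (if ((j ∈ σ) ↔ (φ (X (s j)) = X j)) then X (s j)
      else 1 - X (s j)), isPseudomonomial_prod (σ ∪ τ) s hsinj _, ?_⟩
    rw [map_prod, pm_eq hd]
    refine Finset.prod_congr rfl fun j hj => ?_
    by_cases hjσ : j ∈ σ
    · rw [if_pos hjσ]
      rcases hs j with h1 | h1
      · rw [if_pos (iff_of_true hjσ h1), h1]
      · have hne : ¬ φ (X (s j)) = X j := by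
          rw [h1]
          exact fun hcon => X_ne_one_sub j j hcon.symm
        rw [if_neg (fun hiff => hne (hiff.1 hjσ)), map_sub, map_one, h1]
        ring
    · rw [if_neg hjσ]
      rcases hs j with h1 | h1
      · rw [if_neg (fun hiff => hjσ (hiff.2 h1)), map_sub, map_one, h1]
      · have hne : ¬ φ (X (s j)) = X j := by
          rw [h1]
          exact fun hcon => X_ne_one_sub j j hcon.symm
        rw [if_pos (iff_of_false hjσ hne), h1]
  refine ⟨hpart1, ?_⟩
  -- Part 2
  intro D
  choose G hG1 hG2 using fun w : Fin m → ZMod 2 =>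
    hpart1 (indicatorPM w) (isPseudomonomial_indicator w)
  refine ⟨{v | ∀ w, w ∉ D → eval v (G w) ≠ 1}, ?_⟩
  have hmid : neuralIdeal {v : Fin n → ZMod 2 | ∀ w, w ∉ D → eval v (G w) ≠ 1}
      = Ideal.span (G '' {w | w ∉ D}) := by
    apply le_antisymm
    · rw [neuralIdeal, Ideal.span_le]
      rintro - ⟨v, hv, rfl⟩
      have hv' : ¬ ∀ w, w ∉ D → eval v (G w) ≠ 1 := hv
      push_neg at hv'
      obtain ⟨w, hwD, hwe⟩ := hv'
      obtain ⟨σ', τ', hd', heq⟩ := hG1 w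
      rw [heq] at hwe
      obtain ⟨hpat1, hpat0⟩ := eval_pm_one hwe
      have hdvd : G w ∣ indicatorPM v := by
        rw [heq]
        exact pm_dvd_indicator hpat1
          (fun j hj hc => zmod2_zero_ne_one ((hpat0 j hj).symm.trans hc))
      obtain ⟨c, hc⟩ := hdvd
      rw [SetLike.mem_coe, hc]
      exact Ideal.mul_mem_right c _ (Ideal.subset_span ⟨w, hwD, rfl⟩)
    · rw [Ideal.span_le]
      rintro - ⟨w, hwD, rfl⟩
      obtain ⟨σ', τ', hd', heq⟩ := hG1 w
      rw [SetLike.mem_coe, heq]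
      refine pm_mem_neuralIdeal hd' _ fun v h1 h0 hvC => ?_
      have : eval v (G w) ≠ 1 := hvC w hwD
      rw [heq] at this
      exact this (eval_pm_pattern h1 h0)
  rw [image_coe_ideal φ hsurj, hmid, Ideal.map_span, ← Set.image_comp]
  have hcomp : (⇑φ ∘ G) = indicatorPM := funext hG2
  rw [hcomp, neuralIdeal]
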